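/- The integral ∫_{-∞}^{∞} e^u(e^u - 1) / ((e^u + 1)^3 · u) du equals (7/(2π²))·ζ(3). -/

import Mathlib

set_option maxHeartbeats 1000000

open Real MeasureTheory

namespace Zaux
open Complex Set Filter Topology Asymptotics

noncomputable def F (t : ℝ) : ℂ := ((Real.exp t * (Real.exp t - 1) / (Real.exp t + 1) ^ 3 : ℝ) : ℂ)

noncomputable def G (s : ℂ) : ℂ :=
  -(Real.pi:ℂ) * (1 - 2 ^ ((3:ℂ) - s)) * (2 * (Real.pi:ℂ)) ^ (s - 3) * (2 - s) * (1 - s) *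
    riemannZeta (3 - s) / Complex.cos ((Real.pi:ℂ) * s / 2)

lemma hasSumF {t : ℝ} (ht : 0 < t) :
    HasSum (fun n : ℕ => (-1 : ℂ) ^ (n + 1) * (n : ℂ) ^ 2 * rexp (-(n : ℝ) * t)) (F t) := by
  set q : ℝ := rexp (-t) with hq
  have hq0 : 0 < q := Real.exp_pos _
  have hq1 : q < 1 := Real.exp_lt_one_iff.mpr (by linarith)
  set x : ℂ := -(q : ℂ) with hx
  have hxn : ‖x‖ < 1 := by
    simp only [hx, norm_neg, Complex.norm_real, Real.norm_eq_abs, abs_of_pos hq0]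
    exact hq1
  have S0 := hasSum_choose_mul_geometric_of_norm_lt_one (𝕜 := ℂ) 0 hxn
  have S1 := hasSum_choose_mul_geometric_of_norm_lt_one (𝕜 := ℂ) 1 hxn
  have S2 := hasSum_choose_mul_geometric_of_norm_lt_one (𝕜 := ℂ) 2 hxn
  have combo := (((S2.mul_left 2).sub (S1.mul_left 3)).add S0).neg
  convert combo using 2 with n
  · rfl
  · -- term equality
    have hc2 : (((n + 2).choose 2 : ℕ) : ℂ) = (n + 2) * (n + 1) / 2 := by
      rw [Nat.cast_choose_two]
      push_cast; ring
    have hc1 : (((n + 1).choose 1 : ℕ) : ℂ) = (n + 1) := by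
      rw [Nat.choose_one_right]; push_cast; ring
    have hc0 : (((n + 0).choose 0 : ℕ) : ℂ) = 1 := by simp
    have hexp : rexp (-(n : ℝ) * t) = q ^ n := by
      rw [hq, ← Real.exp_nat_mul]; ring_nf
    rw [hexp, hc2, hc1, hc0]
    have hnp : (-(q:ℂ)) ^ n = (-1 : ℂ) ^ n * (q : ℂ) ^ n := by
      rw [show (-(q:ℂ)) = (-1) * (q:ℂ) by ring, mul_pow]
    push_cast
    rw [hx, hnp, pow_succ]
    ring
  · -- sum equality
    have h1x' : (1:ℂ) - x = ((1 + q : ℝ) : ℂ) := by rw [hx]; push_cast; ring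
    rw [F, h1x']
    have hE : (0:ℝ) < rexp t := Real.exp_pos t
    have hq' : (0:ℝ) < 1 + q := by positivity
    norm_cast
    rw [hq, Real.exp_neg]
    have hEne : rexp t ≠ 0 := hE.ne'
    field_simp
    ring_nf
    field_simp
    ring

lemma cpow_two_sub {N : ℂ} (hN : N ≠ 0) (s : ℂ) : N ^ ((2:ℂ) - s) = N ^ (2:ℕ) / N ^ s := by
  rw [Complex.cpow_sub _ _ hN, show ((2:ℂ)) = ((2:ℕ):ℂ) by norm_num, Complex.cpow_natCast]

lemma mellinF_eq {s : ℂ} (hs : 3 < s.re) :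
    mellin F s = Complex.Gamma s * (1 - 2 ^ ((3:ℂ) - s)) * riemannZeta (s - 2) := by
  set w : ℂ := s - 2 with hw
  have hwre : 1 < w.re := by simp [hw, Complex.sub_re]; linarith
  have hw0 : w ≠ 0 := by
    intro h; rw [h] at hwre; simp at hwre; linarith
  have hs0 : 0 < s.re := by linarith
  have hsne : s ≠ 0 := by
    intro h; rw [h] at hs0; simp at hs0
  have hsum : Summable (fun n : ℕ => 1 / (n:ℂ) ^ w) := Complex.summable_one_div_nat_cpow.mpr hwre
  have hζ : HasSum (fun n : ℕ => 1 / (n:ℂ) ^ w) (riemannZeta w) := by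
    rw [zeta_eq_tsum_one_div_nat_cpow hwre]
    exact hsum.hasSum
  have heven : HasSum (fun k : ℕ => 1 / ((2*k : ℕ):ℂ) ^ w) ((2:ℂ) ^ (-w) * riemannZeta w) := by
    refine (hζ.mul_left ((2:ℂ) ^ (-w))).congr_fun fun k => ?_
    have h2 : ((2*k : ℕ):ℂ) ^ w = (2:ℂ)^w * (k:ℂ)^w := by
      have := mul_cpow_ofReal_nonneg (by norm_num : (0:ℝ) ≤ 2) (Nat.cast_nonneg k) w
      push_cast at this ⊢
      exact this
    rw [h2, Complex.cpow_neg]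
    rw [one_div, mul_inv]
    ring
  have hoddsummable : Summable (fun k : ℕ => 1 / ((2*k+1 : ℕ):ℂ) ^ w) :=
    hsum.comp_injective (fun a b hab => by omega)
  have hodd : HasSum (fun k : ℕ => 1 / ((2*k+1 : ℕ):ℂ) ^ w)
      (riemannZeta w - (2:ℂ) ^ (-w) * riemannZeta w) := by
    have h1 : HasSum (fun n : ℕ => 1/(n:ℂ)^w)
        ((2:ℂ) ^ (-w) * riemannZeta w + ∑' k : ℕ, 1 / ((2*k+1 : ℕ):ℂ) ^ w) :=
      HasSum.even_add_odd (f := fun n : ℕ => 1/(n:ℂ)^w) heven hoddsummable.hasSum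
    have h2 := h1.unique hζ
    have h3 : ∑' k : ℕ, 1 / ((2*k+1 : ℕ):ℂ) ^ w
        = riemannZeta w - (2:ℂ) ^ (-w) * riemannZeta w := by
      linear_combination h2
    rw [← h3]
    exact hoddsummable.hasSum
  have h2w : (2:ℂ) ^ (-w) = (2:ℂ) ^ ((2:ℂ) - s) := by
    rw [hw]; congr 1; ring
  -- mellin side
  have hp : ∀ n : ℕ, ((-1 : ℂ) ^ (n + 1) * (n : ℂ) ^ 2 = 0) ∨ (0 < ((n:ℝ))) := by
    intro n
    rcases Nat.eq_zero_or_pos n with h | h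
    · left; simp [h]
    · right; exact_mod_cast h
  have H1 := hasSum_mellin (a := fun n : ℕ => (-1 : ℂ) ^ (n + 1) * (n : ℂ) ^ 2)
    (p := fun n : ℕ => (n : ℝ)) (F := F) hp hs0 (fun t ht => hasSumF ht) ?_
  swap
  · -- summability of norms
    apply Summable.congr (f := fun n : ℕ => 1 / (n:ℝ) ^ (s.re - 2))
      (Real.summable_one_div_nat_rpow.mpr (by linarith))
    intro n
    rcases Nat.eq_zero_or_pos n with h | h
    · subst h
      simp [Real.zero_rpow (show s.re - 2 ≠ 0 by linarith),
        Real.zero_rpow (show s.re ≠ 0 by linarith)]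
    · have hn : (0:ℝ) < n := by exact_mod_cast h
      simp only [norm_mul, norm_pow, norm_neg, norm_one, one_pow, one_mul,
        Complex.norm_natCast]
      rw [← Real.rpow_natCast (n:ℝ) 2, ← Real.rpow_sub hn,
        show ((2:ℕ):ℝ) - s.re = -(s.re - 2) by push_cast; ring, Real.rpow_neg hn.le, one_div]
  -- identify the sum value: define d
  set d : ℕ → ℂ := fun n => Complex.Gamma s * ((-1 : ℂ) ^ (n + 1) * (n : ℂ) ^ 2) / (((n : ℝ)) : ℂ) ^ s with hd
  have He : HasSum (fun k : ℕ => d (2*k)) (-(Complex.Gamma s) * ((2:ℂ) ^ (-w) * riemannZeta w)) := by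
    refine (heven.mul_left (-(Complex.Gamma s))).congr_fun fun k => ?_
    have hodd1 : (-1 : ℂ) ^ (2*k + 1) = -1 := by
      rw [pow_succ, pow_mul]; norm_num
    rw [hd]
    simp only
    rw [hodd1]
    rcases Nat.eq_zero_or_pos k with h | h
    · subst h
      norm_num [Complex.zero_cpow hsne, Complex.zero_cpow hw0]
    · have hN : ((2*k : ℕ):ℂ) ≠ 0 := Nat.cast_ne_zero.mpr (by omega)
      have key : ((2*k:ℕ):ℂ) ^ (2:ℕ) / ((2*k:ℕ):ℂ) ^ s = 1 / ((2*k:ℕ):ℂ) ^ w := by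
        rw [← cpow_two_sub hN s, show (2:ℂ) - s = -w by rw [hw]; ring, Complex.cpow_neg, one_div]
      push_cast at key ⊢
      linear_combination (-(Complex.Gamma s)) * key
  have Ho : HasSum (fun k : ℕ => d (2*k+1))
      (Complex.Gamma s * (riemannZeta w - (2:ℂ) ^ (-w) * riemannZeta w)) := by
    refine (hodd.mul_left (Complex.Gamma s)).congr_fun fun k => ?_
    have heven1 : (-1 : ℂ) ^ (2*k + 1 + 1) = 1 := by
      rw [pow_succ, pow_succ, pow_mul]; norm_num
    rw [hd]
    simp only
    rw [heven1]
    have hN : ((2*k+1 : ℕ):ℂ) ≠ 0 := Nat.cast_ne_zero.mpr (by omega)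
    have key : ((2*k+1:ℕ):ℂ) ^ (2:ℕ) / ((2*k+1:ℕ):ℂ) ^ s = 1 / ((2*k+1 : ℕ):ℂ)^w := by
      rw [← cpow_two_sub hN s, show (2:ℂ) - s = -w by rw [hw]; ring, Complex.cpow_neg, one_div]
    push_cast at key ⊢
    linear_combination (Complex.Gamma s) * key
  have H2 : HasSum d (-(Complex.Gamma s) * ((2:ℂ) ^ (-w) * riemannZeta w)
      + Complex.Gamma s * (riemannZeta w - (2:ℂ) ^ (-w) * riemannZeta w)) :=
    HasSum.even_add_odd (f := d) He Ho
  have := (H1.unique H2)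
  rw [this]
  have h23 : (2:ℂ) ^ ((3:ℂ) - s) = 2 * (2:ℂ) ^ (-w) := by
    rw [show (3:ℂ) - s = 1 + -w by rw [hw]; ring, Complex.cpow_add _ _ (by norm_num : (2:ℂ) ≠ 0)]
    norm_num
  rw [h23]
  ring

lemma funcEq {s : ℂ} (him : s.im ≠ 0) :
    Complex.Gamma s * (1 - 2 ^ ((3:ℂ) - s)) * riemannZeta (s - 2) = G s := by
  have h1 : ∀ n : ℕ, (3:ℂ) - s ≠ -n := by
    intro n h
    apply him
    have := congrArg Complex.im h
    simpa using this
  have h2 : (3:ℂ) - s ≠ 1 := by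
    intro h
    apply him
    have := congrArg Complex.im h
    simpa using this
  have hfe := riemannZeta_one_sub h1 h2
  rw [show (1:ℂ) - (3 - s) = s - 2 by ring, show -((3:ℂ) - s) = s - 3 by ring] at hfe
  have hcos : Complex.cos ((Real.pi:ℂ) * (3 - s) / 2) = - Complex.sin ((Real.pi:ℂ) * s / 2) := by
    rw [show (Real.pi:ℂ) * (3 - s)/2 = (Real.pi:ℂ) + ((Real.pi:ℂ)/2 - (Real.pi:ℂ)*s/2) by ring]
    rw [Complex.cos_add, Complex.cos_pi, Complex.sin_pi, Complex.cos_pi_div_two_sub]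
    ring
  have h2s : (2:ℂ) - s ≠ 0 := by
    intro h; apply him
    have := congrArg Complex.im h
    simpa using this
  have h1s : (1:ℂ) - s ≠ 0 := by
    intro h; apply him
    have := congrArg Complex.im h
    simpa using this
  have hG3 : Complex.Gamma (3 - s) = (2 - s) * ((1 - s) * Complex.Gamma (1 - s)) := by
    rw [show (3:ℂ) - s = (2 - s) + 1 by ring, Complex.Gamma_add_one (2 - s) h2s,
      show (2:ℂ) - s = (1 - s) + 1 by ring, Complex.Gamma_add_one (1 - s) h1s]
  have hrefl := Complex.Gamma_mul_Gamma_one_sub s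
  have hsin2 : Complex.sin ((Real.pi:ℂ) * s) =
      2 * Complex.sin ((Real.pi:ℂ)*s/2) * Complex.cos ((Real.pi:ℂ)*s/2) := by
    rw [← Complex.sin_two_mul]
    congr 1
    ring
  have hcosne : Complex.cos ((Real.pi:ℂ)*s/2) ≠ 0 := by
    intro h
    rw [Complex.cos_eq_zero_iff] at h
    obtain ⟨k, hk⟩ := h
    apply him
    have := congrArg Complex.im hk
    simp [Complex.mul_im, Complex.div_im, Complex.add_im] at this
    exact this
  have hsinne : Complex.sin ((Real.pi:ℂ)*s) ≠ 0 := by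
    intro h
    rw [Complex.sin_eq_zero_iff] at h
    obtain ⟨k, hk⟩ := h
    apply him
    have := congrArg Complex.im hk
    simp [Complex.mul_im] at this
    exact this
  have hkey : Complex.Gamma s * Complex.Gamma (1-s) *
      (2 * Complex.sin ((Real.pi:ℂ)*s/2) * Complex.cos ((Real.pi:ℂ)*s/2)) = (Real.pi:ℂ) := by
    rw [← hsin2, hrefl, div_mul_cancel₀ _ hsinne]
  rw [hfe, hcos, hG3, G, eq_div_iff hcosne]
  linear_combination (-(1 - 2^((3:ℂ)-s)) * (2*(Real.pi:ℂ))^(s-3) * (2-s) * (1-s) *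
    riemannZeta (3-s)) * hkey

lemma G0 : G 0 = 7 * riemannZeta 3 / (4 * (Real.pi:ℂ)^2) := by
  unfold G
  rw [show (Real.pi:ℂ) * 0 / 2 = 0 by ring, Complex.cos_zero]
  rw [show (3:ℂ) - 0 = ((3:ℕ):ℂ) by norm_num, Complex.cpow_natCast]
  rw [show (0:ℂ) - 3 = -((3:ℕ):ℂ) by norm_num, Complex.cpow_neg, Complex.cpow_natCast]
  have hπ : ((Real.pi:ℂ)) ≠ 0 := Complex.ofReal_ne_zero.mpr Real.pi_ne_zero
  have h2π : ((2:ℂ) * (Real.pi:ℂ)) ≠ 0 := mul_ne_zero two_ne_zero hπ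
  field_simp
  ring

def UU : Set ℂ := ({s : ℂ | -2⁻¹ < s.re ∧ s.re < 1} ∪ {s : ℂ | -2⁻¹ < s.re ∧ 0 < s.im}) ∪
    {s : ℂ | -2⁻¹ < s.re ∧ s.im < 0}

lemma isOpen_UU : IsOpen UU := by
  unfold UU
  refine IsOpen.union (IsOpen.union ?_ ?_) ?_
  · exact (isOpen_lt continuous_const Complex.continuous_re).inter
      (isOpen_lt Complex.continuous_re continuous_const)
  · exact (isOpen_lt continuous_const Complex.continuous_re).inter
      (isOpen_lt continuous_const Complex.continuous_im)
  · exact (isOpen_lt continuous_const Complex.continuous_re).inter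
      (isOpen_lt Complex.continuous_im continuous_const)

lemma preconnected_UU : IsPreconnected UU := by
  have hA : IsPreconnected {s : ℂ | -2⁻¹ < s.re ∧ s.re < 1} :=
    ((convex_halfSpace_re_gt _).inter (convex_halfSpace_re_lt _)).isPreconnected
  have hB : IsPreconnected {s : ℂ | -2⁻¹ < s.re ∧ 0 < s.im} :=
    ((convex_halfSpace_re_gt _).inter (convex_halfSpace_im_gt _)).isPreconnected
  have hC : IsPreconnected {s : ℂ | -2⁻¹ < s.re ∧ s.im < 0} :=
    ((convex_halfSpace_re_gt _).inter (convex_halfSpace_im_lt _)).isPreconnected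
  have hAB := hA.union ((1:ℂ)/2 + Complex.I/2)
    (by constructor <;> simp <;> norm_num)
    (by constructor <;> simp <;> norm_num) hB
  exact hAB.union ((1:ℂ)/2 - Complex.I/2)
    (Or.inl (by constructor <;> simp <;> norm_num))
    (by constructor <;> simp <;> norm_num) hC

lemma mem_UU {s : ℂ} (hs : -2⁻¹ < s.re) (h : s.re < 1 ∨ s.im ≠ 0) : s ∈ UU := by
  rcases h with h | h
  · exact Or.inl (Or.inl ⟨hs, h⟩)
  · rcases h.lt_or_gt with h | h
    · exact Or.inr ⟨hs, h⟩
    · exact Or.inl (Or.inr ⟨hs, h⟩)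

lemma re_UU {s : ℂ} (hs : s ∈ UU) : -2⁻¹ < s.re := by
  rcases hs with (h | h) | h <;> exact h.1

lemma cos_ne_zero_UU {s : ℂ} (hs : s ∈ UU) : Complex.cos ((Real.pi:ℂ) * s / 2) ≠ 0 := by
  intro h
  rw [Complex.cos_eq_zero_iff] at h
  obtain ⟨k, hk⟩ := h
  have hπ : (Real.pi:ℂ) ≠ 0 := Complex.ofReal_ne_zero.mpr Real.pi_ne_zero
  have hs' : s = 2 * (k:ℂ) + 1 := by
    have h3 : (Real.pi:ℂ) * s = (Real.pi:ℂ) * (2 * (k:ℂ) + 1) := by linear_combination 2 * hk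
    exact mul_left_cancel₀ hπ h3
  have hre : s.re = 2 * (k:ℝ) + 1 := by rw [hs']; simp
  have him : s.im = 0 := by rw [hs']; simp
  rcases hs with (h | h) | h
  · rcases le_or_gt 0 k with hk0 | hk0
    · have : (0:ℝ) ≤ (k:ℝ) := by exact_mod_cast hk0
      have := h.2; rw [hre] at this; linarith
    · have hk1 : k ≤ -1 := by omega
      have : (k:ℝ) ≤ -1 := by exact_mod_cast hk1
      have := h.1; rw [hre] at this; linarith
  · have := h.2; rw [him] at this; exact lt_irrefl _ this
  · have := h.2; rw [him] at this; exact lt_irrefl _ this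

lemma contF : Continuous F := by
  apply Complex.continuous_ofReal.comp
  apply Continuous.div (by continuity) (by continuity)
  intro x
  positivity

lemma F_top : F =O[atTop] fun t => rexp (-1 * t) := by
  rw [Asymptotics.isBigO_iff]
  refine ⟨1, ?_⟩
  filter_upwards [eventually_ge_atTop (0:ℝ)] with t ht
  have h1 : (1:ℝ) ≤ rexp t := by
    rw [show (1:ℝ) = rexp 0 by simp]
    exact Real.exp_le_exp.mpr ht
  have h0 : (0:ℝ) < rexp t := Real.exp_pos t
  rw [F, Complex.norm_real, Real.norm_eq_abs, Real.norm_eq_abs,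
    _root_.abs_of_nonneg (by positivity : (0:ℝ) ≤ rexp (-1*t)),
    _root_.abs_of_nonneg (div_nonneg (mul_nonneg h0.le (by linarith)) (by positivity)), one_mul,
    show (-1:ℝ) * t = -t by ring, Real.exp_neg]
  rw [div_le_iff₀ (by positivity), inv_mul_eq_div, le_div_iff₀ h0]
  nlinarith [h0, h1]

lemma F_bot : F =O[𝓝[>] (0:ℝ)] (· ^ (-(-2⁻¹) : ℝ)) := by
  rw [Asymptotics.isBigO_iff]
  refine ⟨9, ?_⟩
  filter_upwards [Ioo_mem_nhdsGT_of_mem (by norm_num : (0:ℝ) ∈ Ico 0 1)] with t ht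
  obtain ⟨ht0, ht1⟩ := ht
  have h0 : (0:ℝ) < rexp t := Real.exp_pos t
  have h1 : (1:ℝ) ≤ rexp t := by
    rw [show (1:ℝ) = rexp 0 by simp]
    exact Real.exp_le_exp.mpr ht0.le
  have hE3 : rexp t ≤ 3 := by
    have := Real.exp_one_lt_d9
    have h2 : rexp t ≤ rexp 1 := Real.exp_le_exp.mpr ht1.le
    linarith
  have htE : rexp t - 1 ≤ t * rexp t := by
    have := Real.add_one_le_exp (-t)
    have h3 : (1 - t) * rexp t ≤ 1 := by
      rw [show (1:ℝ) - t = -t + 1 by ring]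
      calc (-t + 1) * rexp t ≤ rexp (-t) * rexp t := by
            apply mul_le_mul_of_nonneg_right this h0.le
        _ = 1 := by rw [← Real.exp_add]; simp
    nlinarith
  have key : rexp t * (rexp t - 1) / (rexp t + 1) ^ 3 ≤ 9 * t := by
    rw [div_le_iff₀ (by positivity)]
    nlinarith [htE, hE3, h1, ht0.le, pow_le_pow_left₀ (by linarith : (0:ℝ) ≤ 1) (by linarith : (1:ℝ) ≤ rexp t + 1) 3]
  have hhalf : t ≤ t ^ ((2:ℝ)⁻¹) := by
    calc t = t ^ (1:ℝ) := by rw [Real.rpow_one]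
      _ ≤ t ^ ((2:ℝ)⁻¹) := Real.rpow_le_rpow_of_exponent_ge ht0 ht1.le (by norm_num)
  rw [F, Complex.norm_real, Real.norm_eq_abs, Real.norm_eq_abs,
    _root_.abs_of_nonneg (Real.rpow_nonneg ht0.le _),
    _root_.abs_of_nonneg (div_nonneg (mul_nonneg h0.le (by linarith)) (by positivity))]
  calc rexp t * (rexp t - 1) / (rexp t + 1) ^ 3 ≤ 9 * t := key
    _ ≤ 9 * t ^ ((2:ℝ)⁻¹) := by linarith
    _ = 9 * t ^ (-(-(2:ℝ)⁻¹)) := by rw [neg_neg]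

lemma mellinF_diff {s : ℂ} (hs : s ∈ UU) : DifferentiableAt ℂ (mellin F) s :=
  mellin_differentiableAt_of_isBigO_rpow_exp one_pos
    (contF.locallyIntegrable.locallyIntegrableOn _) F_top F_bot (re_UU hs)

lemma G_diff {s : ℂ} (hs : s ∈ UU) : DifferentiableAt ℂ G s := by
  have hz : (3:ℂ) - s ≠ 1 := by
    intro h
    have h2 : s = 2 := by linear_combination -h
    subst h2
    rcases hs with (h | h) | h <;> simp at h <;> linarith [h.2]
  have h2cpow : DifferentiableAt ℂ (fun s : ℂ => (2:ℂ) ^ ((3:ℂ) - s)) s :=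
    DifferentiableAt.const_cpow ((differentiableAt_const _).sub differentiableAt_id)
      (Or.inl (by norm_num))
  have h2π : ((2:ℂ) * (Real.pi:ℂ)) ≠ 0 :=
    mul_ne_zero two_ne_zero (Complex.ofReal_ne_zero.mpr Real.pi_ne_zero)
  have hpicpow : DifferentiableAt ℂ (fun s : ℂ => ((2:ℂ) * (Real.pi:ℂ)) ^ (s - (3:ℂ))) s :=
    DifferentiableAt.const_cpow (differentiableAt_id.sub (differentiableAt_const _))
      (Or.inl h2π)
  have hzeta : DifferentiableAt ℂ (fun s : ℂ => riemannZeta ((3:ℂ) - s)) s :=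
    (differentiableAt_riemannZeta hz).comp s ((differentiableAt_const _).sub differentiableAt_id)
  have hcos : DifferentiableAt ℂ (fun s : ℂ => Complex.cos ((Real.pi:ℂ) * s / 2)) s :=
    Complex.differentiable_cos.differentiableAt.comp s
      (((differentiableAt_const _).mul differentiableAt_id).div_const 2)
  exact DifferentiableAt.div
    ((((((differentiableAt_const _).mul ((differentiableAt_const _).sub h2cpow)).mul
      hpicpow).mul ((differentiableAt_const _).sub differentiableAt_id)).mul
      ((differentiableAt_const _).sub differentiableAt_id)).mul hzeta)
    hcos (cos_ne_zero_UU hs)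

lemma mellin_eq_G : EqOn (mellin F) G UU := by
  have hMa : AnalyticOnNhd ℂ (mellin F) UU :=
    DifferentiableOn.analyticOnNhd (fun s hs => (mellinF_diff hs).differentiableWithinAt)
      isOpen_UU
  have hGa : AnalyticOnNhd ℂ G UU :=
    DifferentiableOn.analyticOnNhd (fun s hs => (G_diff hs).differentiableWithinAt) isOpen_UU
  have hz₀ : ((4:ℂ) + Complex.I) ∈ UU :=
    mem_UU (by simp; norm_num) (Or.inr (by simp))
  apply hMa.eqOn_of_preconnected_of_eventuallyEq hGa preconnected_UU hz₀
  have hSopen : IsOpen {s : ℂ | 3 < s.re ∧ 0 < s.im} :=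
    (isOpen_lt continuous_const Complex.continuous_re).inter
      (isOpen_lt continuous_const Complex.continuous_im)
  have hz₀S : ((4:ℂ) + Complex.I) ∈ {s : ℂ | 3 < s.re ∧ 0 < s.im} :=
    ⟨by norm_num [Complex.add_re], by norm_num [Complex.add_im]⟩
  filter_upwards [hSopen.mem_nhds hz₀S] with s hs
  exact (mellinF_eq hs.1).trans (funcEq (ne_of_gt hs.2))

lemma mellinF_zero : mellin F 0 = G 0 := mellin_eq_G (mem_UU (by norm_num) (Or.inl (by norm_num)))

lemma heven (u : ℝ) :
    Real.exp (-u) * (Real.exp (-u) - 1) / ((Real.exp (-u) + 1) ^ 3 * (-u)) =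
    Real.exp u * (Real.exp u - 1) / ((Real.exp u + 1) ^ 3 * u) := by
  rcases eq_or_ne u 0 with h | h
  · simp [h]
  · have hE : (0:ℝ) < rexp u := Real.exp_pos u
    rw [Real.exp_neg]
    have h1 : (rexp u)⁻¹ + 1 ≠ 0 := by positivity
    have h2 : rexp u + 1 ≠ 0 := by positivity
    field_simp
    ring

lemma habs (u : ℝ) :
    Real.exp |u| * (Real.exp |u| - 1) / ((Real.exp |u| + 1) ^ 3 * |u|) =
    Real.exp u * (Real.exp u - 1) / ((Real.exp u + 1) ^ 3 * u) := by
  rcases abs_choice u with h | h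
  · rw [h]
  · rw [h]; exact heven u

lemma step_half :
    ((∫ u : ℝ, Real.exp u * (Real.exp u - 1) / ((Real.exp u + 1) ^ 3 * u) : ℝ) : ℂ) =
    2 * mellin F 0 := by
  have h1 : (∫ u : ℝ, Real.exp u * (Real.exp u - 1) / ((Real.exp u + 1) ^ 3 * u) : ℝ)
      = 2 * ∫ u in Ioi (0:ℝ), Real.exp u * (Real.exp u - 1) / ((Real.exp u + 1) ^ 3 * u) := by
    rw [← integral_comp_abs
      (f := fun u => Real.exp u * (Real.exp u - 1) / ((Real.exp u + 1) ^ 3 * u))]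
    exact integral_congr_ae (Eventually.of_forall fun u => (habs u).symm)
  rw [h1]
  push_cast
  congr 1
  have hco : ((∫ u in Ioi (0:ℝ), Real.exp u * (Real.exp u - 1) / ((Real.exp u + 1) ^ 3 * u) : ℝ) : ℂ)
      = ∫ u in Ioi (0:ℝ), ((Real.exp u * (Real.exp u - 1) / ((Real.exp u + 1) ^ 3 * u) : ℝ) : ℂ) :=
    (integral_ofReal (𝕜 := ℂ)).symm
  rw [hco, mellin]
  refine setIntegral_congr_fun measurableSet_Ioi fun t ht => ?_
  have ht0 : (0:ℝ) < t := ht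
  have htC : (t:ℂ) ≠ 0 := Complex.ofReal_ne_zero.mpr ht0.ne'
  rw [show (0:ℂ) - 1 = ((-1:ℤ):ℂ) by norm_num, Complex.cpow_intCast, zpow_neg_one, smul_eq_mul, F]
  have h2 : ((rexp t + 1:ℝ):ℂ) ≠ 0 := by
    rw [Complex.ofReal_ne_zero]
    positivity
  push_cast at h2 ⊢
  field_simp


end Zaux

theorem stmt_0 :
    ((∫ u : ℝ, Real.exp u * (Real.exp u - 1) / ((Real.exp u + 1) ^ 3 * u) : ℝ) : ℂ) =
      7 / (2 * (Real.pi : ℂ) ^ 2) * riemannZeta 3 := by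
  rw [Zaux.step_half, Zaux.mellinF_zero, Zaux.G0]
  have hπ : ((Real.pi : ℂ)) ≠ 0 := Complex.ofReal_ne_zero.mpr Real.pi_ne_zero
  field_simp
  ring
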